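/- arXiv:1403.4689 — 4 statements merged into one kernel-verified Lean document; each statement's English description precedes it below -/
import Mathlib

section
/- The function h(y) = θ e^y + y²/(2σ²) − k y (for θ > 0, σ > 0, k ≥ 0 real) is strictly convex on ℝ, attains its minimum at y₀ = kσ² − w where w = W(θσ² e^{kσ²}) and W is the Lambert W function, and the minimum value is h(y₀) = w²/(2σ²) + w/σ² − σ²k²/2. -/
open Real Set

/-- The function h(y) = θe^y + y²/(2σ²) − ky is strictly convex on ℝ, attains
its minimum at y₀ = kσ² − w where w = W(θσ² e^{kσ²}) (Lambert W, characterized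
by w > 0 and w e^w = θσ² e^{kσ²}), with minimum value w²/(2σ²) + w/σ² − σ²k²/2. -/
theorem h_strict_convex_min (θ σ k w : ℝ) (hθ : 0 < θ) (hσ : 0 < σ) (hk : 0 ≤ k)
    (hw : 0 < w) (hW : w * Real.exp w = θ * σ ^ 2 * Real.exp (k * σ ^ 2)) :
    StrictConvexOn ℝ univ
      (fun y : ℝ => θ * Real.exp y + y ^ 2 / (2 * σ ^ 2) - k * y) ∧
    IsMinOn (fun y : ℝ => θ * Real.exp y + y ^ 2 / (2 * σ ^ 2) - k * y) univ
      (k * σ ^ 2 - w) ∧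
    θ * Real.exp (k * σ ^ 2 - w) + (k * σ ^ 2 - w) ^ 2 / (2 * σ ^ 2) - k * (k * σ ^ 2 - w)
      = w ^ 2 / (2 * σ ^ 2) + w / σ ^ 2 - σ ^ 2 * k ^ 2 / 2 := by
  have hσ2 : (0:ℝ) < σ ^ 2 := by positivity
  -- key: θ * exp (kσ² - w) = w / σ²
  have hkey : θ * Real.exp (k * σ ^ 2 - w) * σ ^ 2 = w := by
    have h1 : Real.exp (k * σ ^ 2 - w) = Real.exp (k * σ ^ 2) / Real.exp w := by
      rw [Real.exp_sub]
    rw [h1]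
    have hew : (0:ℝ) < Real.exp w := Real.exp_pos w
    field_simp
    linarith [hW]
  refine ⟨?_, ?_, ?_⟩
  · -- strict convexity via second derivative
    have : StrictConvexOn ℝ univ
        (fun y : ℝ => θ * Real.exp y + y ^ 2 / (2 * σ ^ 2) - k * y) := by
      apply strictConvexOn_of_deriv2_pos convex_univ
      · exact (Continuous.continuousOn (by continuity))
      · intro x hx
        have hd1 : deriv (fun y : ℝ => θ * Real.exp y + y ^ 2 / (2 * σ ^ 2) - k * y)
            = fun y : ℝ => θ * Real.exp y + y / σ ^ 2 - k := by
          funext y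
          have : HasDerivAt (fun y : ℝ => θ * Real.exp y + y ^ 2 / (2 * σ ^ 2) - k * y)
              (θ * Real.exp y + y / σ ^ 2 - k) y := by
            have h1 : HasDerivAt (fun y : ℝ => θ * Real.exp y) (θ * Real.exp y) y :=
              (Real.hasDerivAt_exp y).const_mul θ
            have h2 : HasDerivAt (fun y : ℝ => y ^ 2 / (2 * σ ^ 2)) (y / σ ^ 2) y := by
              have := (hasDerivAt_pow 2 y).div_const (2 * σ ^ 2)
              refine this.congr_deriv ?_
              field_simp
              ring
            have h3 : HasDerivAt (fun y : ℝ => k * y) k y := by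
              simpa using (hasDerivAt_id y).const_mul k
            exact (h1.add h2).sub h3
          exact this.deriv
        simp only [Function.iterate_succ_apply, Function.iterate_zero_apply, Function.iterate_one, id_eq]
        rw [hd1]
        have hd2 : HasDerivAt (fun y : ℝ => θ * Real.exp y + y / σ ^ 2 - k)
            (θ * Real.exp x + 1 / σ ^ 2) x := by
          have h1 : HasDerivAt (fun y : ℝ => θ * Real.exp y) (θ * Real.exp x) x :=
            (Real.hasDerivAt_exp x).const_mul θ
          have h2 : HasDerivAt (fun y : ℝ => y / σ ^ 2) (1 / σ ^ 2) x := by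
            simpa using (hasDerivAt_id x).div_const (σ ^ 2)
          simpa using (h1.add h2).sub_const k
        rw [hd2.deriv]
        have := Real.exp_pos x
        positivity
    exact this
  · intro y _
    simp only [mem_setOf_eq]
    set y₀ := k * σ ^ 2 - w with hy₀
    have hexp : Real.exp y₀ * (1 + (y - y₀)) ≤ Real.exp y := by
      have := Real.add_one_le_exp (y - y₀)
      calc Real.exp y₀ * (1 + (y - y₀)) ≤ Real.exp y₀ * Real.exp (y - y₀) := by
            nlinarith [Real.exp_pos y₀]
        _ = Real.exp y := by rw [← Real.exp_add]; ring_nf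
    have he0 : Real.exp y₀ = w / (θ * σ ^ 2) := by
      rw [eq_div_iff (by positivity : θ * σ ^ 2 ≠ 0)]
      linear_combination hkey
    have hθσ : (0:ℝ) < θ * σ ^ 2 := by positivity
    have key2 : θ * Real.exp y₀ = w / σ ^ 2 := by
      rw [he0]; field_simp
    have h1' : w * (1 + (y - y₀)) ≤ θ * Real.exp y * σ ^ 2 := by
      have h1 : θ * Real.exp y₀ * (1 + (y - y₀)) ≤ θ * Real.exp y := by
        nlinarith [hexp]
      calc w * (1 + (y - y₀)) = θ * Real.exp y₀ * σ ^ 2 * (1 + (y - y₀)) := by rw [hkey]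
        _ = θ * Real.exp y₀ * (1 + (y - y₀)) * σ ^ 2 := by ring
        _ ≤ θ * Real.exp y * σ ^ 2 := by nlinarith [h1]
    have key2 : θ * Real.exp y₀ = w / σ ^ 2 := by
      rw [eq_div_iff (ne_of_gt hσ2)]; linarith [hkey]
    have main : (θ * Real.exp y + y ^ 2 / (2 * σ ^ 2) - k * y)
        - (w / σ ^ 2 + y₀ ^ 2 / (2 * σ ^ 2) - k * y₀) ≥ 0 := by
      have expand : (θ * Real.exp y + y ^ 2 / (2 * σ ^ 2) - k * y)
          - (w / σ ^ 2 + y₀ ^ 2 / (2 * σ ^ 2) - k * y₀)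
          = (θ * Real.exp y * σ ^ 2 * 2 + y ^ 2 - 2 * σ ^ 2 * k * y - 2 * w
              - y₀ ^ 2 + 2 * σ ^ 2 * k * y₀) / (2 * σ ^ 2) := by
        field_simp
        ring
      rw [expand]
      apply div_nonneg _ (by positivity)
      have hy0def : y₀ = k * σ ^ 2 - w := hy₀
      rw [hy0def] at h1' ⊢
      nlinarith [sq_nonneg (y - (k * σ ^ 2 - w)), h1']
    have : θ * Real.exp y₀ + y₀ ^ 2 / (2 * σ ^ 2) - k * y₀
        ≤ θ * Real.exp y + y ^ 2 / (2 * σ ^ 2) - k * y := by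
      rw [key2]; linarith [main]
    exact this
  · have key2 : θ * Real.exp (k * σ ^ 2 - w) = w / σ ^ 2 := by
      field_simp
      linarith [hkey]
    rw [key2]
    field_simp
    ring
end

section
/- Let w = W(θσ² e^{−σ²}) and m = w/(θσ²). Then for x > 0, the tilted lognormal density evaluated at mx satisfies f(mx) e^{−θ m x} proportional (in x, with constant depending only on θ, σ) to x^{w/σ²} e^{−(w/σ²) x} e^{−(log x)²/(2σ²)}; in particular the tilted density of X/m is dominated by a Gamma(w/σ² + 1, w/σ²) density times a constant, with acceptance function e^{−(log x)²/(2σ²)} ≤ 1. -/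
open Real Set

/-- With w = W(θσ² e^{−σ²}) and m = w/(θσ²), for x > 0 the tilted lognormal
density at mx is proportional to x^{w/σ²} e^{−(w/σ²)x} e^{−(log x)²/(2σ²)};
in particular it is dominated by a constant times the Gamma(w/σ²+1, w/σ²)
density kernel, with acceptance function e^{−(log x)²/(2σ²)} ≤ 1. -/
theorem tilted_lognormal_gamma_domination (σ θ w : ℝ) (hσ : 0 < σ) (hθ : 0 < θ)
    (hw : 0 < w) (hW : w * Real.exp w = θ * σ ^ 2 * Real.exp (-σ ^ 2)) :
    ∃ c : ℝ, 0 < c ∧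
      (∀ x : ℝ, 0 < x →
        (1 / ((w / (θ * σ ^ 2) * x) * σ * Real.sqrt (2 * π)) *
            Real.exp (-(Real.log (w / (θ * σ ^ 2) * x)) ^ 2 / (2 * σ ^ 2))) *
          Real.exp (-θ * (w / (θ * σ ^ 2) * x))
        = c * (x ^ (w / σ ^ 2) * Real.exp (-(w / σ ^ 2) * x) *
            Real.exp (-(Real.log x) ^ 2 / (2 * σ ^ 2)))) ∧
      (∀ x : ℝ, 0 < x → Real.exp (-(Real.log x) ^ 2 / (2 * σ ^ 2)) ≤ 1) ∧
      (∀ x : ℝ, 0 < x →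
        (1 / ((w / (θ * σ ^ 2) * x) * σ * Real.sqrt (2 * π)) *
            Real.exp (-(Real.log (w / (θ * σ ^ 2) * x)) ^ 2 / (2 * σ ^ 2))) *
          Real.exp (-θ * (w / (θ * σ ^ 2) * x))
        ≤ c * (x ^ (w / σ ^ 2) * Real.exp (-(w / σ ^ 2) * x))) := by
  have hσ2 : (0:ℝ) < σ ^ 2 := by positivity
  have hS : (0:ℝ) < σ * Real.sqrt (2 * π) := by positivity
  have hθσ : θ * σ ^ 2 = w * Real.exp (w + σ ^ 2) := by
    rw [Real.exp_add, ← mul_assoc, hW, mul_assoc, ← Real.exp_add]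
    simp
  have hm : w / (θ * σ ^ 2) = Real.exp (-(w + σ ^ 2)) := by
    rw [hθσ, Real.exp_neg]
    field_simp
  set c : ℝ := Real.exp (w + σ ^ 2 - (w + σ ^ 2) ^ 2 / (2 * σ ^ 2)) / (σ * Real.sqrt (2 * π))
    with hc
  have hcpos : 0 < c := by positivity
  have hone : ∀ x : ℝ, 0 < x → Real.exp (-(Real.log x) ^ 2 / (2 * σ ^ 2)) ≤ 1 := by
    intro x hx
    have h0 : 0 ≤ (Real.log x) ^ 2 / (2 * σ ^ 2) := by positivity
    refine Real.exp_le_one_iff.mpr ?_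
    rw [neg_div]
    linarith
  have heq : ∀ x : ℝ, 0 < x →
      (1 / ((w / (θ * σ ^ 2) * x) * σ * Real.sqrt (2 * π)) *
          Real.exp (-(Real.log (w / (θ * σ ^ 2) * x)) ^ 2 / (2 * σ ^ 2))) *
        Real.exp (-θ * (w / (θ * σ ^ 2) * x))
      = c * (x ^ (w / σ ^ 2) * Real.exp (-(w / σ ^ 2) * x) *
          Real.exp (-(Real.log x) ^ 2 / (2 * σ ^ 2))) := by
    intro x hx
    rw [hm, Real.log_mul (Real.exp_pos _).ne' hx.ne', Real.log_exp,
      Real.rpow_def_of_pos hx]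
    have hθm : -θ * (Real.exp (-(w + σ ^ 2)) * x) = -(w / σ ^ 2) * x := by
      rw [← hm]; field_simp
    rw [hθm]
    have h1 : 1 / (Real.exp (-(w + σ ^ 2)) * x * σ * Real.sqrt (2 * π))
        = Real.exp (w + σ ^ 2 - Real.log x) / (σ * Real.sqrt (2 * π)) := by
      rw [Real.exp_sub, Real.exp_log hx, Real.exp_neg]
      field_simp
    rw [h1, hc, div_mul_eq_mul_div, div_mul_eq_mul_div, div_mul_eq_mul_div]
    congr 1
    simp only [← Real.exp_add]
    rw [Real.exp_eq_exp]
    field_simp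
    ring
  refine ⟨c, hcpos, heq, hone, ?_⟩
  intro x hx
  rw [heq x hx]
  have hAB : 0 ≤ c * (x ^ (w / σ ^ 2) * Real.exp (-(w / σ ^ 2) * x)) := by positivity
  calc c * (x ^ (w / σ ^ 2) * Real.exp (-(w / σ ^ 2) * x) *
        Real.exp (-(Real.log x) ^ 2 / (2 * σ ^ 2)))
      = c * (x ^ (w / σ ^ 2) * Real.exp (-(w / σ ^ 2) * x)) *
        Real.exp (-(Real.log x) ^ 2 / (2 * σ ^ 2)) := by ring
    _ ≤ c * (x ^ (w / σ ^ 2) * Real.exp (-(w / σ ^ 2) * x)) * 1 :=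
        mul_le_mul_of_nonneg_left (hone x hx) hAB
    _ = c * (x ^ (w / σ ^ 2) * Real.exp (-(w / σ ^ 2) * x)) := by ring
end

section
/- The acceptance probability of the Gamma-proposal rejection sampler equals E[e^{−(log Z)²/(2σ²)}] = (α^{α+1}/Γ(α+1)) √(2π) σ exp{σ²(α+1)²/2} · L(α e^{σ²(α+1)}), where Z ~ Gamma(α+1, α), α = W(θσ² e^{−σ²})/σ², and L is the Laplace transform of the Lognormal(0,σ²) distribution. -/
open Real Set MeasureTheory

/-- The acceptance probability of the Gamma-proposal rejection sampler:
E[e^{−(log Z)²/(2σ²)}] for Z ~ Gamma(α+1, α), α = W(θσ² e^{−σ²})/σ², equals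
(α^{α+1}/Γ(α+1)) √(2π) σ e^{σ²(α+1)²/2} L(α e^{σ²(α+1)}), where L is the
Laplace transform of the Lognormal(0,σ²) distribution. -/
theorem acceptance_probability_formula (σ θ w : ℝ) (hσ : 0 < σ) (hθ : 0 < θ)
    (hw : 0 < w) (hW : w * Real.exp w = θ * σ ^ 2 * Real.exp (-σ ^ 2))
    (L : ℝ → ℝ)
    (hL : ∀ s : ℝ, L s = ∫ x in Ioi (0 : ℝ), Real.exp (-s * x) *
      (1 / (x * σ * Real.sqrt (2 * π)) * Real.exp (-(Real.log x) ^ 2 / (2 * σ ^ 2)))) :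
    (∫ z in Ioi (0 : ℝ), Real.exp (-(Real.log z) ^ 2 / (2 * σ ^ 2)) *
        ((w / σ ^ 2) ^ (w / σ ^ 2 + 1) * z ^ (w / σ ^ 2) * Real.exp (-(w / σ ^ 2) * z) /
          Real.Gamma (w / σ ^ 2 + 1)))
      = (w / σ ^ 2) ^ (w / σ ^ 2 + 1) / Real.Gamma (w / σ ^ 2 + 1) *
          (Real.sqrt (2 * π) * σ) *
          Real.exp (σ ^ 2 * (w / σ ^ 2 + 1) ^ 2 / 2) *
          L (w / σ ^ 2 * Real.exp (σ ^ 2 * (w / σ ^ 2 + 1))) := by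
  have hσ2 : (0:ℝ) < σ ^ 2 := by positivity
  set α := w / σ ^ 2 with hα_def
  have hα : 0 < α := div_pos hw hσ2
  set c := σ ^ 2 * (α + 1) with hc
  set s := α * Real.exp c with hs
  set F : ℝ → ℝ := fun z => Real.exp (-(Real.log z) ^ 2 / (2 * σ ^ 2)) *
        (α ^ (α + 1) * z ^ α * Real.exp (-α * z) / Real.Gamma (α + 1)) with hF
  have hec : (0:ℝ) < Real.exp c := Real.exp_pos c
  have hsub := integral_comp_mul_left_Ioi F 0 hec
  rw [mul_zero] at hsub
  rw [hL]
  have hK : α ^ (α + 1) / Real.Gamma (α + 1) * (Real.sqrt (2 * π) * σ) *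
      Real.exp (σ ^ 2 * (α + 1) ^ 2 / 2) *
      (∫ x in Ioi (0:ℝ), Real.exp (-s * x) *
        (1 / (x * σ * Real.sqrt (2 * π)) * Real.exp (-(Real.log x) ^ 2 / (2 * σ ^ 2))))
      = ∫ x in Ioi (0:ℝ), α ^ (α + 1) / Real.Gamma (α + 1) * (Real.sqrt (2 * π) * σ) *
      Real.exp (σ ^ 2 * (α + 1) ^ 2 / 2) * (Real.exp (-s * x) *
        (1 / (x * σ * Real.sqrt (2 * π)) * Real.exp (-(Real.log x) ^ 2 / (2 * σ ^ 2)))) :=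
    (MeasureTheory.integral_const_mul _ _).symm
  rw [hK]
  have : (∫ z in Ioi (0:ℝ), F z) = Real.exp c • ∫ x in Ioi (0:ℝ), F (Real.exp c * x) := by
    rw [hsub, smul_smul, mul_inv_cancel₀ hec.ne', one_smul]
  rw [this, ← MeasureTheory.integral_smul]
  apply setIntegral_congr_fun measurableSet_Ioi
  intro x hx
  have hx0 : (0:ℝ) < x := hx
  have hz0 : (0:ℝ) < Real.exp c * x := by positivity
  have hGam : (0:ℝ) < Real.Gamma (α + 1) := Real.Gamma_pos_of_pos (by linarith)
  have hsqrt : (0:ℝ) < Real.sqrt (2 * π) := Real.sqrt_pos.mpr (by positivity)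
  simp only [smul_eq_mul, hF]
  set t := Real.log x with ht
  have hlog : Real.log (Real.exp c * x) = c + t := by
    rw [Real.log_mul hec.ne' hx0.ne', Real.log_exp, ht]
  have hrpow : (Real.exp c * x) ^ α = Real.exp (α * (c + t)) := by
    rw [Real.rpow_def_of_pos hz0, hlog, mul_comm]
  have hxinv : (1:ℝ) / (x * σ * Real.sqrt (2 * π))
      = Real.exp (-t) / (σ * Real.sqrt (2 * π)) := by
    rw [Real.exp_neg, Real.exp_log hx0]
    field_simp
  rw [hlog, hrpow, hxinv]
  have hLHSeq : Real.exp c * (Real.exp (-(c + t) ^ 2 / (2 * σ ^ 2)) *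
      (α ^ (α + 1) * Real.exp (α * (c + t)) * Real.exp (-α * (Real.exp c * x)) /
        Real.Gamma (α + 1)))
      = α ^ (α + 1) / Real.Gamma (α + 1) *
        Real.exp (c + -(c + t) ^ 2 / (2 * σ ^ 2) + α * (c + t) + -α * (Real.exp c * x)) := by
    rw [Real.exp_add, Real.exp_add, Real.exp_add]; ring
  have hRHSeq : α ^ (α + 1) / Real.Gamma (α + 1) * (Real.sqrt (2 * π) * σ) *
      Real.exp (σ ^ 2 * (α + 1) ^ 2 / 2) * (Real.exp (-s * x) *
        (Real.exp (-t) / (σ * Real.sqrt (2 * π)) * Real.exp (-t ^ 2 / (2 * σ ^ 2))))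
      = α ^ (α + 1) / Real.Gamma (α + 1) *
        Real.exp (σ ^ 2 * (α + 1) ^ 2 / 2 + -s * x + -t + -t ^ 2 / (2 * σ ^ 2)) := by
    rw [Real.exp_add, Real.exp_add, Real.exp_add]
    field_simp
  rw [hLHSeq, hRHSeq]
  congr 1
  rw [hs, hc]
  field_simp
  ring
end

section
/- With γ(x) as above and θ̃(x) = γ(x) e^{γ(x)}/σ², the approximate saddlepoint satisfies θ̃(x) ~ −log x/(x σ²) as x → 0⁺, i.e., x σ² θ̃(x)/|log x| → 1. -/
open Real Set Filter

lemma eps_tendsto (σ : ℝ) :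
    Tendsto (fun u : ℝ => σ ^ 2 / (u + Real.sqrt (u ^ 2 + 2 * σ ^ 2))) atTop (nhds 0) := by
  apply tendsto_const_nhds.div_atTop
  apply tendsto_atTop_mono (fun u => ?_) tendsto_id
  have := Real.sqrt_nonneg (u ^ 2 + 2 * σ ^ 2)
  simp only [id]; linarith

lemma g_tendsto (σ : ℝ) :
    Tendsto (fun u : ℝ =>
      (u - 1 + σ ^ 2 / (u + Real.sqrt (u ^ 2 + 2 * σ ^ 2))) / (u - 1) *
        Real.exp (σ ^ 2 / (u + Real.sqrt (u ^ 2 + 2 * σ ^ 2)))) atTop (nhds 1) := by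
  have h1 : Tendsto (fun u : ℝ => u - 1) atTop atTop :=
    tendsto_atTop_add_const_right _ (-1) tendsto_id
  have heps := eps_tendsto σ
  have h2 : Tendsto (fun u : ℝ =>
      (σ ^ 2 / (u + Real.sqrt (u ^ 2 + 2 * σ ^ 2))) / (u - 1)) atTop (nhds 0) :=
    heps.div_atTop h1
  have h3 : Tendsto (fun u : ℝ =>
      1 + (σ ^ 2 / (u + Real.sqrt (u ^ 2 + 2 * σ ^ 2))) / (u - 1)) atTop (nhds 1) := by
    simpa using tendsto_const_nhds.add h2
  have h4 : Tendsto (fun u : ℝ =>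
      Real.exp (σ ^ 2 / (u + Real.sqrt (u ^ 2 + 2 * σ ^ 2)))) atTop (nhds 1) := by
    simpa [Function.comp_def] using (Real.continuous_exp.continuousAt (x := (0:ℝ))).tendsto.comp heps
  have := h3.mul h4
  rw [one_mul] at this
  refine this.congr' ?_
  filter_upwards [eventually_gt_atTop (1 : ℝ)] with u hu
  have hu1 : u - 1 ≠ 0 := by linarith
  field_simp

/-- With γ(x) = (−1 − log x + √((1 − log x)² + 2σ²))/2 and
θ̃(x) = γ(x)e^{γ(x)}/σ², the approximate saddlepoint satisfies
θ̃(x) ~ −log x/(xσ²) as x → 0⁺, i.e. xσ²θ̃(x)/|log x| → 1. -/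
theorem approx_saddlepoint_asymptotic (σ : ℝ) (hσ : 0 < σ) :
    Tendsto (fun x : ℝ =>
        x * σ ^ 2 *
          ((-1 - Real.log x + Real.sqrt ((1 - Real.log x) ^ 2 + 2 * σ ^ 2)) / 2 *
            Real.exp ((-1 - Real.log x + Real.sqrt ((1 - Real.log x) ^ 2 + 2 * σ ^ 2)) / 2) /
            σ ^ 2) / |Real.log x|)
      (nhdsWithin 0 (Ioi 0)) (nhds 1) := by
  have hu : Tendsto (fun x : ℝ => 1 - Real.log x) (nhdsWithin 0 (Ioi 0)) atTop := by
    have hlog : Tendsto Real.log (nhdsWithin 0 (Ioi 0)) atBot :=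
      Real.tendsto_log_nhdsGT_zero
    have : Tendsto (fun x : ℝ => -Real.log x) (nhdsWithin 0 (Ioi 0)) atTop :=
      tendsto_neg_atBot_atTop.comp hlog
    simpa [sub_eq_add_neg] using tendsto_atTop_add_const_left _ 1 this
  have hcomp := (g_tendsto σ).comp hu
  refine hcomp.congr' ?_
  have hmem : Ioo (0:ℝ) 1 ∈ nhdsWithin (0:ℝ) (Ioi 0) :=
    Ioo_mem_nhdsGT_of_mem (by norm_num : (0:ℝ) ∈ Ico (0:ℝ) 1)
  filter_upwards [hmem] with x hx
  obtain ⟨hx0, hx1⟩ := hx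
  simp only [Function.comp_apply]
  set l := Real.log x with hl
  have hlneg : l < 0 := Real.log_neg hx0 hx1
  set u := 1 - l with hud
  have hu1 : 1 < u := by simp [hud]; linarith
  set s := Real.sqrt (u ^ 2 + 2 * σ ^ 2) with hs
  have hs0 : 0 < s := Real.sqrt_pos.mpr (by positivity)
  have hssq : s ^ 2 = u ^ 2 + 2 * σ ^ 2 := Real.sq_sqrt (by positivity)
  have hsu : 0 < u + s := by linarith
  have hsqrt_eq : Real.sqrt ((1 - l) ^ 2 + 2 * σ ^ 2) = s := by rw [hs, hud]
  have heps : σ ^ 2 / (u + s) = (s - u) / 2 := by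
    rw [div_eq_div_iff (by linarith) (by norm_num)]
    nlinarith
  have hγ : (-1 - l + s) / 2 = (u - 1) + (s - u) / 2 := by
    rw [hud]; ring
  have habs : |l| = u - 1 := by
    rw [abs_of_neg hlneg, hud]; ring
  have hx_exp : x = Real.exp l := (Real.exp_log hx0).symm
  have hσ2 : (σ:ℝ) ^ 2 ≠ 0 := by positivity
  simp only [Function.comp, ← hud, hsqrt_eq, heps, hγ, habs]
  have hexp : x * Real.exp ((u - 1) + (s - u) / 2) = Real.exp ((s - u) / 2) := by
    rw [hx_exp, ← Real.exp_add]
    congr 1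
    rw [hud]; ring
  have hne : u - 1 ≠ 0 := by linarith
  rw [show x * σ ^ 2 * ((u - 1 + (s - u) / 2) * Real.exp (u - 1 + (s - u) / 2) / σ ^ 2) / (u - 1)
      = (u - 1 + (s - u) / 2) * (x * Real.exp (u - 1 + (s - u) / 2)) / (u - 1) from by
    field_simp, hexp]
  ring
end
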